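/- For programs P, Q and a set of atoms A: P and Q are strongly equivalent relative to A (P ∪ R and Q ∪ R have the same answer sets for every program R over A) if and only if for each unary program U over A, P ∪ U and Q ∪ U have the same answer sets. -/

import Mathlib

structure Rule where
  head : Finset ℕ
  pos : Finset ℕ
  neg : Finset ℕ

abbrev Interp := Set ℕ
abbrev Program := Set Rule

/-- Classical satisfaction of a rule by an interpretation. -/
def Rule.satisfied (I : Interp) (r : Rule) : Prop :=
  ((↑r.pos ⊆ I) ∧ ∀ a ∈ r.neg, a ∉ I) → ∃ a ∈ r.head, a ∈ I

/-- `I` is a classical model of the program `P`. -/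
def Models (I : Interp) (P : Program) : Prop := ∀ r ∈ P, Rule.satisfied I r

/-- `X` models the Gelfond-Lifschitz reduct `P^Y`. -/
def ModelsReduct (X : Interp) (P : Program) (Y : Interp) : Prop :=
  ∀ r ∈ P, (∀ a ∈ r.neg, a ∉ Y) → (↑r.pos ⊆ X) → ∃ a ∈ r.head, a ∈ X

/-- `Y` is an answer set of `P`: a minimal model of the reduct `P^Y`. -/
def AnswerSet (P : Program) (Y : Interp) : Prop :=
  ModelsReduct Y P Y ∧ ∀ Z : Interp, Z ⊂ Y → ¬ ModelsReduct Z P Y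

/-- `(X,Y)` is an SE-model of `P`. -/
def SEModel (P : Program) (X Y : Interp) : Prop :=
  X ⊆ Y ∧ Models Y P ∧ ModelsReduct X P Y

/-- `(X,Y)` is a UE-model of `P`. -/
def UEModel (P : Program) (X Y : Interp) : Prop :=
  SEModel P X Y ∧ ∀ X', SEModel P X' Y → X ⊂ X' → X' = Y

/-- The program consisting of the atoms in `F` as facts. -/
def Facts (F : Set ℕ) : Program := { r | ∃ a ∈ F, r = ⟨{a}, ∅, ∅⟩ }

/-- Uniform equivalence of programs. -/
def UnifEquiv (P Q : Program) : Prop :=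
  ∀ F : Set ℕ, ∀ Y : Interp, AnswerSet (P ∪ Facts F) Y ↔ AnswerSet (Q ∪ Facts F) Y

/-- Strong equivalence of programs. -/
def StrongEquiv (P Q : Program) : Prop :=
  ∀ R : Program, ∀ Y : Interp, AnswerSet (P ∪ R) Y ↔ AnswerSet (Q ∪ R) Y

def Rule.atoms (r : Rule) : Finset ℕ := r.head ∪ r.pos ∪ r.neg

/-- All atoms occurring in `R` belong to `A`. -/
def ProgramOver (A : Set ℕ) (R : Program) : Prop := ∀ r ∈ R, ↑r.atoms ⊆ A

/-- Strong equivalence relative to a set of atoms `A`. -/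
def RelStrongEquiv (A : Set ℕ) (P Q : Program) : Prop :=
  ∀ R : Program, ProgramOver A R →
    ∀ Y : Interp, AnswerSet (P ∪ R) Y ↔ AnswerSet (Q ∪ R) Y

/-- Uniform equivalence relative to a set of atoms `A`. -/
def RelUnifEquiv (A : Set ℕ) (P Q : Program) : Prop :=
  ∀ F : Set ℕ, F ⊆ A →
    ∀ Y : Interp, AnswerSet (P ∪ Facts F) Y ↔ AnswerSet (Q ∪ Facts F) Y

/-- A unary rule: one head atom, no negation, at most one positive body atom. -/
def Unary (r : Rule) : Prop := r.head.card = 1 ∧ r.neg = ∅ ∧ r.pos.card ≤ 1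

/-- `(X,Y)` is a (relativized) `A`-SE-model of `P`. -/
def ASEModel (A : Set ℕ) (P : Program) (X Y : Interp) : Prop :=
  (X = Y ∨ X ⊂ Y ∩ A) ∧ Models Y P ∧
  (∀ Y' : Interp, Y' ⊂ Y → Y' ∩ A = Y ∩ A → ¬ ModelsReduct Y' P Y) ∧
  (X ⊂ Y → ∃ X' : Interp, X' ⊆ Y ∧ X' ∩ A = X ∧ ModelsReduct X' P Y)

/-- `(X,Y)` is a (relativized) `A`-UE-model of `P`. -/
def AUEModel (A : Set ℕ) (P : Program) (X Y : Interp) : Prop :=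
  ASEModel A P X Y ∧ ∀ X', ASEModel A P X' Y → X ⊂ X' → X' = Y

/-- A positive program: all rules have empty negative body. -/
def Positive (P : Program) : Prop := ∀ r ∈ P, r.neg = ∅

/-- Positive dependency: edge from a positive body atom to a head atom. -/
def Dep (P : Program) (a b : ℕ) : Prop := ∃ r ∈ P, a ∈ r.pos ∧ b ∈ r.head

/-- Head-cycle freeness: no directed cycle of the positive dependency graph
through two distinct head atoms of one rule. -/
def HCF (P : Program) : Prop :=
  ∀ r ∈ P, ∀ a ∈ r.head, ∀ b ∈ r.head, a ≠ b →
    ¬ (Relation.ReflTransGen (Dep P) a b ∧ Relation.ReflTransGen (Dep P) b a)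

/-- The shift of a single rule. -/
def Rule.shift (r : Rule) : Program :=
  if r.head = ∅ then {r}
  else { r' | ∃ a ∈ r.head, r' = ⟨{a}, r.pos, r.neg ∪ (r.head.erase a)⟩ }

/-- The shift of a program. -/
def shiftProg (P : Program) : Program := ⋃ r ∈ P, r.shift

/-- The set of SE-models of `P` as a set of pairs. -/
def SEset (P : Program) : Set (Interp × Interp) := { p | SEModel P p.1 p.2 }

namespace Stmt10Aux

/-- Unary "dependency" program: a ← b for a, b ∈ S. -/
def DepProg (S : Set ℕ) : Program := { r | ∃ a ∈ S, ∃ b ∈ S, r = ⟨{a}, {b}, ∅⟩ }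

lemma modelsReduct_union {X Y : Interp} {P R : Program} :
    ModelsReduct X (P ∪ R) Y ↔ ModelsReduct X P Y ∧ ModelsReduct X R Y := by
  constructor
  · exact fun h => ⟨fun r hr => h r (Or.inl hr), fun r hr => h r (Or.inr hr)⟩
  · rintro ⟨h1, h2⟩ r (hr | hr)
    · exact h1 r hr
    · exact h2 r hr

lemma models_iff_reduct_self {Y : Interp} {P : Program} :
    Models Y P ↔ ModelsReduct Y P Y := by
  constructor
  · exact fun h r hr hneg hpos => h r hr ⟨hpos, hneg⟩
  · exact fun h r hr ⟨hpos, hneg⟩ => h r hr hneg hpos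

lemma modelsReduct_facts {X Y : Interp} {F : Set ℕ} :
    ModelsReduct X (Facts F) Y ↔ F ⊆ X := by
  constructor
  · intro h a ha
    have := h ⟨{a}, ∅, ∅⟩ ⟨a, ha, rfl⟩ (by simp) (by simp)
    simpa using this
  · rintro hFX r ⟨a, ha, rfl⟩ _ _
    exact ⟨a, by simp, hFX ha⟩

lemma modelsReduct_dep {X Y : Interp} {S : Set ℕ} :
    ModelsReduct X (DepProg S) Y ↔ ∀ a ∈ S, ∀ b ∈ S, b ∈ X → a ∈ X := by
  constructor
  · intro h a ha b hb hbX
    have := h ⟨{a}, {b}, ∅⟩ ⟨a, ha, b, hb, rfl⟩ (by simp) (by simpa using hbX)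
    simpa using this
  · rintro h r ⟨a, ha, b, hb, rfl⟩ _ hpos
    refine ⟨a, by simp, h a ha b hb ?_⟩
    simpa using hpos (by simp : b ∈ (↑({b} : Finset ℕ) : Set ℕ))

lemma reduct_over {A : Set ℕ} {R : Program} (hR : ProgramOver A R)
    {Z₁ Z₂ Y : Interp} (h : Z₁ ∩ A = Z₂ ∩ A) :
    ModelsReduct Z₁ R Y → ModelsReduct Z₂ R Y := by
  intro hm r hr hneg hpos
  have hatoms := hR r hr
  have hposA : (↑r.pos : Set ℕ) ⊆ A := fun x hx => hatoms (by
    simp only [Rule.atoms, Finset.coe_union, Set.mem_union, Finset.mem_coe] at *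
    tauto)
  have hheadA : (↑r.head : Set ℕ) ⊆ A := fun x hx => hatoms (by
    simp only [Rule.atoms, Finset.coe_union, Set.mem_union, Finset.mem_coe] at *
    tauto)
  have hpos1 : (↑r.pos : Set ℕ) ⊆ Z₁ := by
    intro x hx
    have : x ∈ Z₂ ∩ A := ⟨hpos hx, hposA hx⟩
    rw [← h] at this
    exact this.1
  obtain ⟨a, haH, haZ⟩ := hm r hr hneg hpos1
  have : a ∈ Z₁ ∩ A := ⟨haZ, hheadA haH⟩
  rw [h] at this
  exact ⟨a, haH, this.1⟩

/-- Diagonal characterization. -/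
lemma diag {A : Set ℕ} {P : Program} {Y : Interp} :
    ASEModel A P Y Y ↔ AnswerSet (P ∪ Facts (Y ∩ A)) Y := by
  constructor
  · rintro ⟨_, hM, hmin, _⟩
    constructor
    · exact modelsReduct_union.mpr ⟨models_iff_reduct_self.mp hM,
        modelsReduct_facts.mpr Set.inter_subset_left⟩
    · intro Z hZ hZm
      obtain ⟨hZP, hZF⟩ := modelsReduct_union.mp hZm
      have hYA : Y ∩ A ⊆ Z := modelsReduct_facts.mp hZF
      have hZA : Z ∩ A = Y ∩ A := by
        apply Set.Subset.antisymm
        · exact Set.inter_subset_inter_left A hZ.subset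
        · exact fun x hx => ⟨hYA hx, hx.2⟩
      exact hmin Z hZ hZA hZP
  · rintro ⟨hred, hmin⟩
    obtain ⟨hP, _⟩ := modelsReduct_union.mp hred
    refine ⟨Or.inl rfl, models_iff_reduct_self.mpr hP, ?_, ?_⟩
    · intro Y' hY' hY'A hY'P
      have hF : ModelsReduct Y' (Facts (Y ∩ A)) Y :=
        modelsReduct_facts.mpr (by rw [← hY'A]; exact Set.inter_subset_left)
      exact hmin Y' hY' (modelsReduct_union.mpr ⟨hY'P, hF⟩)
    · intro h; exact absurd rfl h.ne

/-- Off-diagonal characterization. -/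
lemma offdiag {A : Set ℕ} {P : Program} {X Y : Interp} (hX : X ⊂ Y ∩ A) :
    ASEModel A P X Y ↔
      (ASEModel A P Y Y ∧
        ¬ AnswerSet (P ∪ (Facts X ∪ DepProg ((Y ∩ A) \ X))) Y) := by
  set S := (Y ∩ A) \ X with hS
  have hXA : X ⊆ A := fun x hx => (hX.subset hx).2
  have hXY : X ⊂ Y := by
    refine ⟨fun x hx => (hX.subset hx).1, fun hYX => ?_⟩
    exact hX.not_subset (fun x hx => hYX hx.1)
  constructor
  · rintro ⟨_, hM, hmin, hex⟩
    refine ⟨⟨Or.inl rfl, hM, hmin, fun h => absurd rfl h.ne⟩, ?_⟩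
    obtain ⟨X', hX'Y, hX'A, hX'P⟩ := hex hXY
    intro hAS
    have hX'ne : X' ≠ Y := by
      intro h; subst h
      exact hX.ne hX'A.symm
    apply hAS.2 X' ⟨hX'Y, fun h => hX'ne (Set.Subset.antisymm hX'Y h)⟩
    refine modelsReduct_union.mpr ⟨hX'P, modelsReduct_union.mpr ⟨?_, ?_⟩⟩
    · exact modelsReduct_facts.mpr (by rw [← hX'A]; exact Set.inter_subset_left)
    · rw [modelsReduct_dep]
      intro a ha b hb hbX'
      have : b ∈ X := by rw [← hX'A]; exact ⟨hbX', hb.1.2⟩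
      exact absurd this hb.2
  · rintro ⟨⟨_, hM, hmin, _⟩, hnAS⟩
    have hred : ModelsReduct Y (P ∪ (Facts X ∪ DepProg S)) Y := by
      refine modelsReduct_union.mpr ⟨models_iff_reduct_self.mp hM,
        modelsReduct_union.mpr ⟨modelsReduct_facts.mpr hXY.subset, ?_⟩⟩
      rw [modelsReduct_dep]
      exact fun a ha _ _ _ => ha.1.1
    have : ∃ Z, Z ⊂ Y ∧ ModelsReduct Z (P ∪ (Facts X ∪ DepProg S)) Y := by
      by_contra hc
      push_neg at hc
      exact hnAS ⟨hred, fun Z hZ => hc Z hZ⟩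
    obtain ⟨Z, hZY, hZm⟩ := this
    obtain ⟨hZP, hZU⟩ := modelsReduct_union.mp hZm
    obtain ⟨hZF, hZD⟩ := modelsReduct_union.mp hZU
    have hXZ : X ⊆ Z := modelsReduct_facts.mp hZF
    rw [modelsReduct_dep] at hZD
    by_cases hcase : ∃ b ∈ S, b ∈ Z
    · obtain ⟨b, hb, hbZ⟩ := hcase
      have hSZ : S ⊆ Z := fun a ha => hZD a ha b hb hbZ
      have hZA : Z ∩ A = Y ∩ A := by
        apply Set.Subset.antisymm
        · exact Set.inter_subset_inter_left A hZY.subset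
        · intro x hx
          by_cases hxX : x ∈ X
          · exact ⟨hXZ hxX, hx.2⟩
          · exact ⟨hSZ ⟨hx, hxX⟩, hx.2⟩
      exact absurd hZP (hmin Z hZY hZA)
    · push_neg at hcase
      have hZA : Z ∩ A = X := by
        apply Set.Subset.antisymm
        · intro x hx
          by_contra hxX
          exact hcase x ⟨⟨hZY.subset hx.1, hx.2⟩, hxX⟩ hx.1
        · exact fun x hx => ⟨hXZ hx, hXA hx⟩
      exact ⟨Or.inr hX, hM, hmin, fun _ => ⟨Z, hZY.subset, hZA, hZP⟩⟩

lemma facts_over {A F : Set ℕ} (h : F ⊆ A) : ProgramOver A (Facts F) := by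
  rintro r ⟨a, ha, rfl⟩ x hx
  simp [Rule.atoms] at hx
  subst hx
  exact h ha

lemma facts_unary {F : Set ℕ} : ∀ r ∈ Facts F, Unary r := by
  rintro r ⟨a, _, rfl⟩
  exact ⟨by simp, rfl, by simp⟩

lemma dep_over {A S : Set ℕ} (h : S ⊆ A) : ProgramOver A (DepProg S) := by
  rintro r ⟨a, ha, b, hb, rfl⟩ x hx
  simp [Rule.atoms] at hx
  rcases hx with he | he
  · rw [he]; exact h ha
  · rw [he]; exact h hb

lemma dep_unary {S : Set ℕ} : ∀ r ∈ DepProg S, Unary r := by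
  rintro r ⟨a, _, b, _, rfl⟩
  exact ⟨by simp, rfl, by simp⟩

lemma union_over {A : Set ℕ} {R₁ R₂ : Program}
    (h1 : ProgramOver A R₁) (h2 : ProgramOver A R₂) : ProgramOver A (R₁ ∪ R₂) := by
  rintro r (hr | hr)
  · exact h1 r hr
  · exact h2 r hr

/-- Unary equivalence transfers A-SE-models. -/
lemma ase_transfer {A : Set ℕ} {P Q : Program}
    (H : ∀ U : Program, ProgramOver A U → (∀ r ∈ U, Unary r) →
      ∀ Y : Interp, AnswerSet (P ∪ U) Y ↔ AnswerSet (Q ∪ U) Y)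
    {X Y : Interp} (hA : ASEModel A P X Y) : ASEModel A Q X Y := by
  have hdiagYY : ASEModel A P Y Y → ASEModel A Q Y Y := by
    intro h
    rw [diag] at h ⊢
    exact (H (Facts (Y ∩ A)) (facts_over Set.inter_subset_right) facts_unary Y).mp h
  rcases hA.1 with rfl | hXlt
  · exact hdiagYY hA
  · rw [offdiag hXlt] at hA ⊢
    obtain ⟨hYY, hnAS⟩ := hA
    refine ⟨hdiagYY hYY, ?_⟩
    have hU : ProgramOver A (Facts X ∪ DepProg ((Y ∩ A) \ X)) :=
      union_over (facts_over (fun x hx => (hXlt.subset hx).2))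
        (dep_over (fun x hx => hx.1.2))
    have hUu : ∀ r ∈ (Facts X ∪ DepProg ((Y ∩ A) \ X)), Unary r := by
      rintro r (hr | hr)
      · exact facts_unary r hr
      · exact dep_unary r hr
    intro h
    exact hnAS ((H _ hU hUu Y).mpr h)

/-- Same A-SE-models implies relative strong equivalence (one direction). -/
lemma ase_to_as {A : Set ℕ} {P Q : Program}
    (hASE : ∀ X Y : Interp, ASEModel A P X Y → ASEModel A Q X Y)
    (hASE' : ∀ X Y : Interp, ASEModel A Q X Y → ASEModel A P X Y)
    {R : Program} (hR : ProgramOver A R) {Y : Interp}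
    (h : AnswerSet (P ∪ R) Y) : AnswerSet (Q ∪ R) Y := by
  obtain ⟨hP, hRred⟩ := modelsReduct_union.mp h.1
  have hAYY_P : ASEModel A P Y Y := by
    refine ⟨Or.inl rfl, models_iff_reduct_self.mpr hP, ?_, fun hlt => absurd rfl hlt.ne⟩
    intro Y' hY' hY'A hY'P
    have hY'R : ModelsReduct Y' R Y := reduct_over hR hY'A.symm hRred
    exact h.2 Y' hY' (modelsReduct_union.mpr ⟨hY'P, hY'R⟩)
  have hAYY_Q : ASEModel A Q Y Y := hASE Y Y hAYY_P
  obtain ⟨_, hMQ, hminQ, _⟩ := hAYY_Q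
  constructor
  · exact modelsReduct_union.mpr ⟨models_iff_reduct_self.mp hMQ, hRred⟩
  · intro Z hZY hZm
    obtain ⟨hZQ, hZR⟩ := modelsReduct_union.mp hZm
    by_cases hcase : Z ∩ A = Y ∩ A
    · exact hminQ Z hZY hcase hZQ
    · have hXlt : Z ∩ A ⊂ Y ∩ A :=
        ⟨Set.inter_subset_inter_left A hZY.subset, fun hsub => hcase
          (Set.Subset.antisymm (Set.inter_subset_inter_left A hZY.subset) hsub)⟩
      have hXY : Z ∩ A ⊂ Y := by
        refine ⟨fun x hx => hZY.subset hx.1, ?_⟩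
        intro hsub
        exact hZY.not_subset (fun x hx => (hsub hx).1)
      have hAXQ : ASEModel A Q (Z ∩ A) Y :=
        ⟨Or.inr hXlt, hMQ, hminQ, fun _ => ⟨Z, hZY.subset, rfl, hZQ⟩⟩
      have hAXP : ASEModel A P (Z ∩ A) Y := hASE' (Z ∩ A) Y hAXQ
      obtain ⟨X', hX'Y, hX'A, hX'P⟩ := hAXP.2.2.2 hXY
      have hX'R : ModelsReduct X' R Y := reduct_over hR hX'A.symm hZR
      have hX'lt : X' ⊂ Y := by
        refine ⟨hX'Y, fun hsub => ?_⟩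
        have hXY' : X' = Y := Set.Subset.antisymm hX'Y hsub
        subst hXY'
        exact hXlt.ne hX'A.symm
      exact h.2 X' hX'lt (modelsReduct_union.mpr ⟨hX'P, hX'R⟩)

end Stmt10Aux

open Stmt10Aux in
theorem stmt10 (P Q : Program) (A : Set ℕ) :
    RelStrongEquiv A P Q ↔
      ∀ U : Program, ProgramOver A U → (∀ r ∈ U, Unary r) →
        ∀ Y : Interp, AnswerSet (P ∪ U) Y ↔ AnswerSet (Q ∪ U) Y := by
  constructor
  · intro h U hU _ Y
    exact h U hU Y
  · intro H R hR Y
    have H' : ∀ U : Program, ProgramOver A U → (∀ r ∈ U, Unary r) →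
        ∀ Y : Interp, AnswerSet (Q ∪ U) Y ↔ AnswerSet (P ∪ U) Y :=
      fun U hU hu Y => (H U hU hu Y).symm
    have h1 : ∀ X Y : Interp, ASEModel A P X Y → ASEModel A Q X Y :=
      fun X Y => ase_transfer H
    have h2 : ∀ X Y : Interp, ASEModel A Q X Y → ASEModel A P X Y :=
      fun X Y => ase_transfer H'
    exact ⟨ase_to_as h1 h2 hR, ase_to_as h2 h1 hR⟩
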